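/- In the same SSP setting, let π* be a proper deterministic policy with value V* satisfying V*(s) = c(s,π*(s)) + P_{s,π*(s)}V* and V*(g) = 0, and let V̄ with V̄(g)=0, ‖V̄‖_∞ < ∞, satisfy for every s ≠ g: V̄(s) ≤ ĉ(s,π*(s)) + P̃'_{s,π*(s)}V̄ + b(s,π*(s)). Then V̄(s̄) − V*(s̄) ≤ Σ_{h=0}^∞ Σ_{s≠g} ξ*_h(s)·[(P̃'_{s,π*(s)} − P_{s,π*(s)})V̄ + ĉ(s,π*(s)) − c(s,π*(s)) + b(s,π*(s))], where ξ*_h(s) is the probability of being at s at step h under π* and P starting from s̄. -/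

import Mathlib

open Finset

/-- Simulation-lemma style upper decomposition for SSP along the optimal proper policy:
if `V̄` is a subsolution of the pessimistic empirical Bellman operator along `π⋆`, then
`V̄(s̄) - V⋆(s̄) ≤ Σ_h Σ_{s≠g} ξ⋆_h(s) [(P̃' - P)V̄ + ĉ - c + b](s, π⋆(s))`. -/
theorem stmt_18 {S A : Type*} [Fintype S] [DecidableEq S]
    (g sbar : S) (πs : S → A)
    (P Ptil : S → A → S → ℝ) (c chat b : S → A → ℝ)
    (hP0 : ∀ s a s', 0 ≤ P s a s') (hP1 : ∀ s a, ∑ s', P s a s' = 1)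
    (habs : ∀ (a : A) (s' : S), P g a s' = if s' = g then (1 : ℝ) else 0)
    (hcg : ∀ a, c g a = 0) (hchatg : ∀ a, chat g a = 0)
    (Vstar Vbar : S → ℝ) (hVstarg : Vstar g = 0) (hVbarg : Vbar g = 0)
    (hBell : ∀ s, s ≠ g → Vstar s = c s (πs s) + ∑ s', P s (πs s) s' * Vstar s')
    (hVbar : ∀ s, s ≠ g →
      Vbar s ≤ chat s (πs s) + (∑ s', Ptil s (πs s) s' * Vbar s') + b s (πs s))
    (ξ : ℕ → S → ℝ)
    (hξinit : ∀ s, ξ 0 s = if s = sbar then (1 : ℝ) else 0)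
    (hξrec : ∀ h s', ξ (h + 1) s' = ∑ s, ξ h s * P s (πs s) s')
    -- properness of `π⋆`: the expected hitting time of `g` is finite
    (hproper : Summable (fun h : ℕ =>
      ∑ s ∈ Finset.univ.filter (fun s : S => s ≠ g), ξ h s)) :
    Vbar sbar - Vstar sbar
      ≤ ∑' h : ℕ, ∑ s ∈ Finset.univ.filter (fun s : S => s ≠ g), ξ h s *
          (((∑ s', Ptil s (πs s) s' * Vbar s') - ∑ s', P s (πs s) s' * Vbar s')
            + chat s (πs s) - c s (πs s) + b s (πs s)) := by
  classical
  set T : Finset S := Finset.univ.filter (fun s : S => s ≠ g) with hT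
  set W : S → ℝ := fun s => Vbar s - Vstar s with hWdef
  set Δ : S → ℝ := fun s =>
    ((∑ s', Ptil s (πs s) s' * Vbar s') - ∑ s', P s (πs s) s' * Vbar s')
      + chat s (πs s) - c s (πs s) + b s (πs s) with hΔdef
  set e : ℕ → ℝ := fun h => ∑ s ∈ T, ξ h s * W s with hedef
  set d : ℕ → ℝ := fun h => ∑ s ∈ T, ξ h s * Δ s with hddef
  set t : ℕ → ℝ := fun h => ∑ s ∈ T, ξ h s with htdef
  have hWg : W g = 0 := by simp [hWdef, hVbarg, hVstarg]
  have hξnn : ∀ h s, 0 ≤ ξ h s := by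
    intro h
    induction h with
    | zero => intro s; rw [hξinit]; positivity
    | succ n ih =>
      intro s
      rw [hξrec]
      exact Finset.sum_nonneg fun s' _ => mul_nonneg (ih s') (hP0 _ _ _)
  have hTsub : T ⊆ Finset.univ := Finset.subset_univ T
  -- the one-step inequality
  have hstep : ∀ h, e h ≤ d h + e (h + 1) := by
    intro h
    have hrw : e (h + 1) = ∑ s ∈ T, ξ h s * ∑ s', P s (πs s) s' * W s' := by
      calc e (h + 1) = ∑ s' ∈ T, ∑ s, ξ h s * P s (πs s) s' * W s' := by
            simp only [hedef, hξrec, Finset.sum_mul]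
        _ = ∑ s, ∑ s' ∈ T, ξ h s * P s (πs s) s' * W s' := Finset.sum_comm
        _ = ∑ s ∈ T, ∑ s' ∈ T, ξ h s * P s (πs s) s' * W s' := by
            refine (Finset.sum_subset hTsub ?_).symm
            intro s _ hs
            have hsg : s = g := by
              simpa [hT] using hs
            refine Finset.sum_eq_zero fun s' hs' => ?_
            have hs'g : s' ≠ g := by simpa [hT] using hs'
            simp [hsg, habs, hs'g]
        _ = ∑ s ∈ T, ∑ s', ξ h s * P s (πs s) s' * W s' := by
            refine Finset.sum_congr rfl fun s _ => ?_
            refine Finset.sum_subset hTsub ?_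
            intro s' _ hs'
            have : s' = g := by simpa [hT] using hs'
            simp [this, hWg]
        _ = ∑ s ∈ T, ξ h s * ∑ s', P s (πs s) s' * W s' := by
            refine Finset.sum_congr rfl fun s _ => ?_
            rw [Finset.mul_sum]
            exact Finset.sum_congr rfl fun s' _ => by ring
    rw [hrw, hddef]
    rw [← Finset.sum_add_distrib]
    refine Finset.sum_le_sum fun s hs => ?_
    have hsg : s ≠ g := by simpa [hT] using hs
    have hkey : W s ≤ Δ s + ∑ s', P s (πs s) s' * W s' := by
      have h1 : ∑ s', P s (πs s) s' * W s'
          = (∑ s', P s (πs s) s' * Vbar s') - ∑ s', P s (πs s) s' * Vstar s' := by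
        rw [← Finset.sum_sub_distrib]
        exact Finset.sum_congr rfl fun s' _ => by simp [hWdef]; ring
      have h2 := hVbar s hsg
      have h3 := hBell s hsg
      simp only [hWdef, hΔdef, h1]
      linarith
    calc ξ h s * W s ≤ ξ h s * (Δ s + ∑ s', P s (πs s) s' * W s') :=
          mul_le_mul_of_nonneg_left hkey (hξnn h s)
      _ = ξ h s * Δ s + ξ h s * ∑ s', P s (πs s) s' * W s' := by ring
  -- telescoping
  have htel : ∀ N, e 0 ≤ (∑ h ∈ Finset.range N, d h) + e N := by
    intro N
    induction N with
    | zero => simp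
    | succ n ih =>
      calc e 0 ≤ (∑ h ∈ Finset.range n, d h) + e n := ih
        _ ≤ (∑ h ∈ Finset.range n, d h) + (d n + e (n + 1)) := by
            linarith [hstep n]
        _ = (∑ h ∈ Finset.range (n + 1), d h) + e (n + 1) := by
            rw [Finset.sum_range_succ]; ring
  -- e 0 = W sbar
  have he0 : e 0 = W sbar := by
    have : e 0 = ∑ s ∈ T, (if s = sbar then W s else 0) := by
      simp only [hedef, hξinit]
      exact Finset.sum_congr rfl fun s _ => by split <;> simp
    rw [this, Finset.sum_ite_eq' T sbar W]
    by_cases hs : sbar = g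
    · simp [hT, hs, hWg]
    · simp [hT, hs]
  -- bounds
  have hSne : (Finset.univ : Finset S).Nonempty := ⟨g, Finset.mem_univ g⟩
  set M : ℝ := Finset.univ.sup' hSne (fun s => |W s|) with hMdef
  set C : ℝ := Finset.univ.sup' hSne (fun s => |Δ s|) with hCdef
  have hM : ∀ s, |W s| ≤ M := by
    intro s; rw [hMdef]; exact Finset.le_sup' (fun s => |W s|) (Finset.mem_univ s)
  have hC : ∀ s, |Δ s| ≤ C := by
    intro s; rw [hCdef]; exact Finset.le_sup' (fun s => |Δ s|) (Finset.mem_univ s)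
  have htnn : ∀ h, 0 ≤ t h := fun h => Finset.sum_nonneg fun s _ => hξnn h s
  have heM : ∀ h, |e h| ≤ t h * M := by
    intro h
    calc |e h| ≤ ∑ s ∈ T, |ξ h s * W s| := Finset.abs_sum_le_sum_abs _ _
      _ ≤ ∑ s ∈ T, ξ h s * M := by
          refine Finset.sum_le_sum fun s _ => ?_
          rw [abs_mul, abs_of_nonneg (hξnn h s)]
          exact mul_le_mul_of_nonneg_left (hM s) (hξnn h s)
      _ = t h * M := by rw [htdef, Finset.sum_mul]
  have hdC : ∀ h, |d h| ≤ t h * C := by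
    intro h
    calc |d h| ≤ ∑ s ∈ T, |ξ h s * Δ s| := Finset.abs_sum_le_sum_abs _ _
      _ ≤ ∑ s ∈ T, ξ h s * C := by
          refine Finset.sum_le_sum fun s _ => ?_
          rw [abs_mul, abs_of_nonneg (hξnn h s)]
          exact mul_le_mul_of_nonneg_left (hC s) (hξnn h s)
      _ = t h * C := by rw [htdef, Finset.sum_mul]
  have htprop : Summable t := hproper
  have hdsum : Summable d :=
    Summable.of_norm_bounded (htprop.mul_right C) fun h => by
      simpa [Real.norm_eq_abs] using hdC h
  have ht0 : Filter.Tendsto t Filter.atTop (nhds 0) := htprop.tendsto_atTop_zero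
  have he0lim : Filter.Tendsto e Filter.atTop (nhds 0) := by
    have hb : Filter.Tendsto (fun h => t h * M) Filter.atTop (nhds 0) := by
      simpa using ht0.mul_const M
    exact squeeze_zero_norm (fun h => by simpa [Real.norm_eq_abs] using heM h) hb
  have hpartial : Filter.Tendsto (fun N => ∑ h ∈ Finset.range N, d h)
      Filter.atTop (nhds (∑' h, d h)) := hdsum.hasSum.tendsto_sum_nat
  have hlim : Filter.Tendsto (fun N => (∑ h ∈ Finset.range N, d h) + e N)
      Filter.atTop (nhds (∑' h, d h)) := by
    simpa using hpartial.add he0lim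
  have hfinal : e 0 ≤ ∑' h, d h := ge_of_tendsto' hlim htel
  rw [he0] at hfinal
  exact hfinal
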